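/- arXiv:1811.05610 — 3 statements merged into one kernel-verified Lean document; each statement's English description precedes it below -/
import Mathlib

section
/- Let α ∈ (0,2), s ∈ ℝ with s ≠ 0, x ∈ ℝ, and let φ : ℝ → ℝ be twice continuously differentiable with φ, φ′, φ″ bounded. Then the function y ↦ φ(x+sy) − φ(x) − s y φ′(x) 1_{{|y|<1}}(y) is ν^α-integrable, and ∫_{ℝ∖{0}} [φ(x+sy) − φ(x) − s y φ′(x) 1_{{|y|<1}}(y)] ν^α(dy) = |s|^α ∫_{ℝ∖{0}} [φ(x+z) − φ(x) − z φ′(x) 1_{{|z|<1}}(z)] ν^α(dz). -/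
open MeasureTheory Real Set Filter Topology

/-- The constant `c(1,α) = α Γ((1+α)/2) / (2^{1-α} π^{1/2} Γ(1-α/2))`. -/
noncomputable def c1 (α : ℝ) : ℝ :=
  α * Real.Gamma ((1 + α) / 2) / (2 ^ (1 - α) * Real.sqrt π * Real.Gamma (1 - α / 2))

/-- The Lévy measure `ν^α(dz) = c(1,α) |z|^{-1-α} dz` on `ℝ ∖ {0}`. -/
noncomputable def nuSym (α : ℝ) : Measure ℝ :=
  (volume.restrict {(0:ℝ)}ᶜ).withDensity fun z => ENNReal.ofReal (c1 α * |z| ^ (-(1 + α)))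

/-- The density of `ν^α` as a real-valued function. -/
noncomputable def wf (α : ℝ) (z : ℝ) : ℝ := c1 α * |z| ^ (-(1 + α))

lemma c1_pos {α : ℝ} (hα0 : 0 < α) (hα2 : α < 2) : 0 < c1 α := by
  have h1 : 0 < Real.Gamma ((1 + α) / 2) := Real.Gamma_pos_of_pos (by linarith)
  have h2 : 0 < Real.Gamma (1 - α / 2) := Real.Gamma_pos_of_pos (by linarith)
  have h3 : (0:ℝ) < (2:ℝ) ^ (1 - α) := Real.rpow_pos_of_pos two_pos _
  have h4 : 0 < Real.sqrt π := Real.sqrt_pos.2 Real.pi_pos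
  exact div_pos (mul_pos hα0 h1) (mul_pos (mul_pos h3 h4) h2)

lemma nu_eq (α : ℝ) : nuSym α = volume.withDensity fun z => ENNReal.ofReal (wf α z) := by
  unfold nuSym wf
  rw [show (volume : Measure ℝ).restrict {(0:ℝ)}ᶜ = volume from by simp]

lemma wf_meas (α : ℝ) : Measurable (wf α) :=
  measurable_const.mul (measurable_id.abs.pow measurable_const)

lemma wf_nonneg {α : ℝ} (hα0 : 0 < α) (hα2 : α < 2) (z : ℝ) : 0 ≤ wf α z :=
  mul_nonneg (c1_pos hα0 hα2).le (Real.rpow_nonneg (abs_nonneg z) _)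

lemma integrable_nu_iff {α : ℝ} (hα0 : 0 < α) (hα2 : α < 2) (g : ℝ → ℝ) :
    Integrable g (nuSym α) ↔ Integrable (fun z => g z * wf α z) volume := by
  rw [nu_eq,
    integrable_withDensity_iff (wf_meas α).ennreal_ofReal
      (ae_of_all _ fun z => ENNReal.ofReal_lt_top)]
  rw [show (fun z => g z * (ENNReal.ofReal (wf α z)).toReal) = fun z => g z * wf α z from
    funext fun z => by rw [ENNReal.toReal_ofReal (wf_nonneg hα0 hα2 z)]]

lemma integral_nu {α : ℝ} (hα0 : 0 < α) (hα2 : α < 2) (g : ℝ → ℝ) :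
    ∫ z, g z ∂(nuSym α) = ∫ z, g z * wf α z := by
  rw [nu_eq]
  rw [show (fun z : ℝ => ENNReal.ofReal (wf α z))
      = fun z => (((wf α z).toNNReal : NNReal) : ENNReal) from rfl]
  rw [integral_withDensity_eq_integral_smul (wf_meas α).real_toNNReal g]
  congr 1; funext z
  rw [NNReal.smul_def, Real.coe_toNNReal _ (wf_nonneg hα0 hα2 z), smul_eq_mul, mul_comm]

lemma wf_scale {α : ℝ} {s : ℝ} (hs : s ≠ 0) (y : ℝ) :
    wf α y = |s| ^ (1 + α) * wf α (s * y) := by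
  unfold wf
  rw [abs_mul, Real.mul_rpow (abs_nonneg s) (abs_nonneg y)]
  have key : |s| ^ (1 + α) * |s| ^ (-(1 + α)) = 1 := by
    rw [← Real.rpow_add (abs_pos.2 hs), show (1 + α) + -(1 + α) = 0 by ring, Real.rpow_zero]
  linear_combination (-(c1 α * |y| ^ (-(1 + α)))) * key

lemma aux_int {α : ℝ} (hα0 : 0 < α) (hα2 : α < 2) :
    Integrable (fun z : ℝ => |z| ^ (-(1+α)) * min (z^2) 1) := by
  have hmeas : AEStronglyMeasurable (fun z : ℝ => |z| ^ (-(1+α)) * min (z^2) 1) volume :=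
    ((measurable_id.abs.pow measurable_const).mul
      ((measurable_id.pow_const 2).min measurable_const)).aestronglyMeasurable
  have hIoi : IntegrableOn (fun z : ℝ => |z| ^ (-(1+α)) * min (z^2) 1) (Ioi 0) := by
    rw [← Ioo_union_Ici_eq_Ioi (zero_lt_one), integrableOn_union]
    constructor
    · refine Integrable.mono'
        ((intervalIntegral.integrableOn_Ioo_rpow_iff one_pos).2 (by linarith : (-1:ℝ) < 1 - α))
        hmeas.restrict ?_
      filter_upwards [ae_restrict_mem measurableSet_Ioo] with z hz
      have hz0 : (0:ℝ) < z := hz.1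
      have h1 : |z| = z := abs_of_pos hz0
      rw [Real.norm_eq_abs, abs_of_nonneg (mul_nonneg (Real.rpow_nonneg (abs_nonneg z) _)
        (le_min (sq_nonneg z) zero_le_one)), h1]
      calc z ^ (-(1+α)) * min (z^2) 1 ≤ z ^ (-(1+α)) * z^2 :=
            mul_le_mul_of_nonneg_left (min_le_left _ _) (Real.rpow_nonneg hz0.le _)
        _ = z ^ (1 - α) := by
            rw [← Real.rpow_natCast z 2, ← Real.rpow_add hz0]
            congr 1
            push_cast
            ring
    · have hbase : IntegrableOn (fun z : ℝ => z ^ (-(1+α))) (Ici 1) := by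
        refine (integrableOn_Ioi_rpow_of_lt (by linarith : -(1+α) < -1)
          (by norm_num : (0:ℝ) < 1/2)).mono_set ?_
        intro z hz
        exact lt_of_lt_of_le (by norm_num : (1/2:ℝ) < 1) hz
      refine Integrable.mono' hbase hmeas.restrict ?_
      filter_upwards [ae_restrict_mem measurableSet_Ici] with z hz
      have hz0 : (0:ℝ) < z := lt_of_lt_of_le one_pos hz
      rw [Real.norm_eq_abs, abs_of_nonneg (mul_nonneg (Real.rpow_nonneg (abs_nonneg z) _)
        (le_min (sq_nonneg z) zero_le_one)), abs_of_pos hz0]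
      calc z ^ (-(1+α)) * min (z^2) 1 ≤ z ^ (-(1+α)) * 1 :=
            mul_le_mul_of_nonneg_left (min_le_right _ _) (Real.rpow_nonneg hz0.le _)
        _ = z ^ (-(1+α)) := mul_one _
  rw [← integrableOn_univ, ← Iio_union_Ici (a := (0:ℝ)), integrableOn_union,
    integrableOn_Ici_iff_integrableOn_Ioi]
  refine ⟨?_, hIoi⟩
  rw [← (Measure.measurePreserving_neg (volume : Measure ℝ)).integrableOn_comp_preimage
      (Homeomorph.neg ℝ).measurableEmbedding]
  simp only [Function.comp_def, abs_neg, neg_sq, Homeomorph.neg, neg_preimage, neg_Iio, neg_zero]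
  exact hIoi

lemma taylor_bd {φ : ℝ → ℝ} (hφ : ContDiff ℝ 2 φ) {C : ℝ} (hC0 : 0 ≤ C)
    (hC : ∀ y, |deriv (deriv φ) y| ≤ C) (x z : ℝ) :
    |φ (x + z) - φ x - z * deriv φ x| ≤ C * z ^ 2 := by
  have hφ1 : Differentiable ℝ φ := hφ.differentiable (by norm_num)
  have hφ2 : Differentiable ℝ (deriv φ) := by
    have h2 : ContDiff ℝ ((1 : ℕ) + 1) φ := by exact_mod_cast hφ
    exact ((contDiff_succ_iff_deriv.mp h2).2.2).differentiable (by norm_num)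
  have hlip : ∀ a b : ℝ, |deriv φ a - deriv φ b| ≤ C * |a - b| := by
    intro a b
    have := Convex.norm_image_sub_le_of_norm_deriv_le (f := deriv φ) (s := Set.univ)
      (fun t _ => hφ2 t) (fun t _ => by simpa [Real.norm_eq_abs] using hC t)
      convex_univ (mem_univ b) (mem_univ a)
    simpa [Real.norm_eq_abs] using this
  set g : ℝ → ℝ := fun t => φ (x + t) - φ x - t * deriv φ x with hgdef
  have hgd : ∀ t, HasDerivAt g (deriv φ (x + t) - deriv φ x) t := by
    intro t
    have h1 : HasDerivAt (fun t : ℝ => φ (x + t)) (deriv φ (x + t)) t := by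
      have h0 := HasDerivAt.comp t ((hφ1 (x + t)).hasDerivAt) ((hasDerivAt_id t).const_add x)
      rw [mul_one] at h0
      exact h0
    have h3 := (h1.sub_const (φ x)).sub ((hasDerivAt_id t).mul_const (deriv φ x))
    rw [one_mul] at h3
    exact h3
  have key := Convex.norm_image_sub_le_of_norm_deriv_le (f := g) (s := Icc (-|z|) |z|)
      (fun t _ => (hgd t).differentiableAt)
      (fun t ht => by
        rw [(hgd t).deriv, Real.norm_eq_abs]
        calc |deriv φ (x + t) - deriv φ x| ≤ C * |x + t - x| := hlip _ _
          _ = C * |t| := by ring_nf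
          _ ≤ C * |z| := mul_le_mul_of_nonneg_left (abs_le.2 ⟨ht.1, ht.2⟩) hC0)
      (convex_Icc _ _) (⟨neg_nonpos_of_nonneg (abs_nonneg z), abs_nonneg z⟩)
      ⟨neg_abs_le z, le_abs_self z⟩
  have hg0 : g 0 = 0 := by simp [hgdef]
  have hgz : g z = φ (x + z) - φ x - z * deriv φ x := rfl
  rw [hg0, sub_zero, hgz, Real.norm_eq_abs, Real.norm_eq_abs, sub_zero] at key
  calc |φ (x + z) - φ x - z * deriv φ x| ≤ C * |z| * |z| := key
    _ = C * z ^ 2 := by rw [mul_assoc, abs_mul_abs_self, sq]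

/-- scaling identity for the compensated jump integrand: for `s ≠ 0` and
`φ ∈ C²` bounded with bounded first and second derivatives, the integrand is
`ν^α`-integrable and
`∫ [φ(x+sy) - φ(x) - syφ'(x)1_{|y|<1}] ν^α(dy)
  = |s|^α ∫ [φ(x+z) - φ(x) - zφ'(x)1_{|z|<1}] ν^α(dz)`. -/
theorem stmt_2 (α s x : ℝ) (hα : α ∈ Set.Ioo (0:ℝ) 2) (hs : s ≠ 0)
    (φ : ℝ → ℝ) (hφ : ContDiff ℝ 2 φ)
    (C : ℝ) (hbd : ∀ y, |φ y| ≤ C ∧ |deriv φ y| ≤ C ∧ |deriv (deriv φ) y| ≤ C) :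
    Integrable
      (fun y => φ (x + s * y) - φ x - s * y * deriv φ x * (if |y| < 1 then (1:ℝ) else 0))
      (nuSym α) ∧
    ∫ y, (φ (x + s * y) - φ x - s * y * deriv φ x * (if |y| < 1 then (1:ℝ) else 0)) ∂(nuSym α)
      = |s| ^ α *
        ∫ z, (φ (x + z) - φ x - z * deriv φ x * (if |z| < 1 then (1:ℝ) else 0)) ∂(nuSym α) := by
  obtain ⟨hα0, hα2⟩ := hα
  have hC0 : 0 ≤ C := le_trans (abs_nonneg _) (hbd 0).1
  set d := deriv φ x with hd
  set f : ℝ → ℝ := fun z => φ (x + z) - φ x - z * d * (if |z| < 1 then (1:ℝ) else 0) with hf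
  set g : ℝ → ℝ := fun y => φ (x + s * y) - φ x - s * y * d * (if |y| < 1 then (1:ℝ) else 0)
    with hg
  set h : ℝ → ℝ := fun z =>
    z * d * ((if |z| < 1 then (1:ℝ) else 0) - (if |z| < |s| then (1:ℝ) else 0)) with hh
  -- decomposition g y = f (s y) + h (s y)
  have hgfh : ∀ y, g y = f (s * y) + h (s * y) := by
    intro y
    have hiff : (|s * y| < |s|) = (|y| < 1) := by
      rw [abs_mul]
      exact propext (mul_lt_iff_lt_one_right (abs_pos.2 hs))
    simp only [hf, hg, hh, hiff]
    ring
  -- measurability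
  have hφm : Measurable φ := hφ.continuous.measurable
  have hind1 : Measurable fun z : ℝ => if |z| < 1 then (1:ℝ) else 0 :=
    Measurable.ite (measurableSet_lt measurable_abs measurable_const)
      measurable_const measurable_const
  have hind2 : Measurable fun z : ℝ => if |z| < |s| then (1:ℝ) else 0 :=
    Measurable.ite (measurableSet_lt measurable_abs measurable_const)
      measurable_const measurable_const
  have hfm : Measurable f := by
    rw [hf]
    exact ((hφm.comp (measurable_const.add measurable_id)).sub measurable_const).sub
      ((measurable_id.mul_const d).mul hind1)
  have hhm : Measurable h := by
    rw [hh]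
    exact (measurable_id.mul_const d).mul (hind1.sub hind2)
  -- pointwise bound for f
  have hf_bound : ∀ z, |f z| ≤ 2 * C * min (z ^ 2) 1 := by
    intro z
    simp only [hf]
    by_cases hz : |z| < 1
    · rw [if_pos hz, mul_one]
      have h1 : z ^ 2 ≤ 1 := by nlinarith [sq_abs z, abs_nonneg z]
      rw [min_eq_left h1]
      have := taylor_bd hφ hC0 (fun y => (hbd y).2.2) x z
      rw [← hd] at this
      nlinarith [sq_nonneg z]
    · rw [if_neg hz, mul_zero, sub_zero]
      have h1 : (1:ℝ) ≤ z ^ 2 := by nlinarith [sq_abs z, not_lt.1 hz]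
      rw [min_eq_right h1, mul_one]
      calc |φ (x + z) - φ x| = |φ (x + z) + -(φ x)| := by ring_nf
        _ ≤ |φ (x + z)| + |(-(φ x))| := abs_add_le _ _
        _ = |φ (x + z)| + |φ x| := by rw [abs_neg]
        _ ≤ C + C := add_le_add (hbd _).1 (hbd _).1
        _ = 2 * C := by ring
  -- integrability of f * wf
  have hwf_int : Integrable (fun z => f z * wf α z) volume := by
    refine Integrable.mono' ((aux_int hα0 hα2).const_mul (2 * C * c1 α))
      ((hfm.mul (wf_meas α)).aestronglyMeasurable) (ae_of_all _ fun z => ?_)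
    rw [Real.norm_eq_abs, abs_mul, abs_of_nonneg (wf_nonneg hα0 hα2 z)]
    calc |f z| * wf α z ≤ (2 * C * min (z ^ 2) 1) * wf α z :=
          mul_le_mul_of_nonneg_right (hf_bound z) (wf_nonneg hα0 hα2 z)
      _ = 2 * C * c1 α * (|z| ^ (-(1 + α)) * min (z ^ 2) 1) := by unfold wf; ring
  -- integrability of h * wf
  have hwh_int : Integrable (fun z => h z * wf α z) volume := by
    set m : ℝ := min 1 |s| with hm'
    set M : ℝ := max 1 |s| with hM'
    have hm : 0 < m := lt_min one_pos (abs_pos.2 hs)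
    have hM : 0 < M := lt_of_lt_of_le one_pos (le_max_left _ _)
    set K : ℝ := M * |d| * (c1 α * m ^ (-(1 + α))) with hK'
    have hK0 : 0 ≤ K :=
      mul_nonneg (mul_nonneg hM.le (abs_nonneg d))
        (mul_nonneg (c1_pos hα0 hα2).le (Real.rpow_nonneg hm.le _))
    refine Integrable.mono'
      ((integrable_indicator_iff measurableSet_Icc).2
        (integrableOn_const (C := K) (s := Icc (-M) M) (μ := volume) (hs := measure_Icc_lt_top.ne)))
      ((hhm.mul (wf_meas α)).aestronglyMeasurable) (ae_of_all _ fun z => ?_)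
    by_cases hzM : M ≤ |z|
    · have e1 : ¬(|z| < 1) := not_lt.2 (le_trans (le_max_left _ _) hzM)
      have e2 : ¬(|z| < |s|) := not_lt.2 (le_trans (le_max_right _ _) hzM)
      have : h z = 0 := by simp only [hh]; rw [if_neg e1, if_neg e2]; ring
      rw [this, zero_mul, norm_zero]
      exact Set.indicator_nonneg (fun _ _ => hK0) z
    · by_cases hzm : |z| < m
      · have e1 : |z| < 1 := lt_of_lt_of_le hzm (min_le_left _ _)
        have e2 : |z| < |s| := lt_of_lt_of_le hzm (min_le_right _ _)
        have : h z = 0 := by simp only [hh]; rw [if_pos e1, if_pos e2]; ring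
        rw [this, zero_mul, norm_zero]
        exact Set.indicator_nonneg (fun _ _ => hK0) z
      · have hzM' : |z| ≤ M := le_of_lt (not_le.1 hzM)
        have hmem : z ∈ Icc (-M) M := by
          rw [mem_Icc]; exact abs_le.1 hzM'
        rw [Set.indicator_of_mem hmem]
        have hdiff : |(if |z| < 1 then (1:ℝ) else 0) - (if |z| < |s| then (1:ℝ) else 0)| ≤ 1 := by
          split_ifs <;> norm_num
        have hwz : wf α z ≤ c1 α * m ^ (-(1 + α)) :=
          mul_le_mul_of_nonneg_left
            (Real.rpow_le_rpow_of_nonpos hm (not_lt.1 hzm) (by linarith))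
            (c1_pos hα0 hα2).le
        have h1 : |h z| ≤ M * |d| := by
          simp only [hh]
          rw [abs_mul, abs_mul]
          calc |z| * |d| * |(if |z| < 1 then (1:ℝ) else 0) - (if |z| < |s| then (1:ℝ) else 0)|
              ≤ M * |d| * 1 := by gcongr
            _ = M * |d| := mul_one _
        calc ‖h z * wf α z‖ = |h z| * wf α z := by
              rw [Real.norm_eq_abs, abs_mul, abs_of_nonneg (wf_nonneg hα0 hα2 z)]
          _ ≤ (M * |d|) * (c1 α * m ^ (-(1 + α))) :=
              mul_le_mul h1 hwz (wf_nonneg hα0 hα2 z) (by positivity)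
          _ = K := by rw [hK']
  -- odd function: the h-part integrates to zero
  have hzero : ∫ z, h z * wf α z = 0 := by
    have h2 : ∀ z : ℝ, h (-z) * wf α (-z) = -(h z * wf α z) := by
      intro z
      simp only [hh]
      unfold wf
      simp only [abs_neg]
      ring
    have h1 := integral_neg_eq_self (fun z => h z * wf α z) (volume : Measure ℝ)
    rw [show (fun z : ℝ => (fun z => h z * wf α z) (-z)) = fun z => -(h z * wf α z) from
      funext fun z => h2 z] at h1
    rw [integral_neg] at h1
    linarith
  -- function identity for the scaled integrand
  have heq : (fun y => g y * wf α y)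
      = fun y => |s| ^ (1 + α) * ((fun z => f z * wf α z + h z * wf α z) (s * y)) := by
    funext y
    show g y * wf α y = |s| ^ (1 + α) * (f (s * y) * wf α (s * y) + h (s * y) * wf α (s * y))
    rw [hgfh y, wf_scale hs y]
    ring
  have hsum_int : Integrable (fun z => f z * wf α z + h z * wf α z) volume :=
    hwf_int.add hwh_int
  have hpow : |s| ^ (1 + α) * |s⁻¹| = |s| ^ α := by
    rw [abs_inv, Real.rpow_add (abs_pos.2 hs), Real.rpow_one]
    field_simp
  constructor
  · rw [integrable_nu_iff hα0 hα2]
    rw [heq]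
    exact ((integrable_comp_mul_left_iff
      (fun z => f z * wf α z + h z * wf α z) hs).2 hsum_int).const_mul _
  · rw [integral_nu hα0 hα2, integral_nu hα0 hα2]
    calc ∫ y, g y * wf α y
        = ∫ y, |s| ^ (1 + α) * ((fun z => f z * wf α z + h z * wf α z) (s * y)) := by rw [heq]
      _ = |s| ^ (1 + α) * ∫ y, (fun z => f z * wf α z + h z * wf α z) (s * y) :=
          integral_const_mul _ _
      _ = |s| ^ (1 + α) * (|s⁻¹| • ∫ z, (f z * wf α z + h z * wf α z)) := by
          rw [MeasureTheory.Measure.integral_comp_mul_left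
            (fun z => f z * wf α z + h z * wf α z) s]
      _ = |s| ^ α * ∫ z, (f z * wf α z + h z * wf α z) := by
          rw [smul_eq_mul, ← mul_assoc, hpow]
      _ = |s| ^ α * ∫ z, f z * wf α z := by
          rw [integral_add hwf_int hwh_int, hzero, add_zero]
end

section
/- (Key CFL inequality.) Let α ∈ (0,2), let J ≥ 2 be an integer, h = 1/J, x_j = jh, let M̃ > 0 and let σ : ℝ → ℝ satisfy |σ(x)| ≤ M̃ for all x; set c(x) := c(1,α)|σ(x)|^α. Suppose Δt > 0 satisfies Δt/h^α ≤ 1/( 2 M̃^α c(1,α) (1 + 1/α − ζ(α−1)) ), where ζ is the analytically continued Riemann zeta function. Then for every integer j with |j| < J, L̂_j := −2Δt c(x_j) ζ(α−1) h^{−α} + (c(x_j)Δt/α)[(1+x_j)^{−α} + (1−x_j)^{−α}] + c(x_j) Δt h ∑″_{k=−J−j, k≠0}^{J−j} |kh|^{−1−α} ≤ 1, where ∑″ denotes the sum in which the two end terms k = −J−j and k = J−j are given weight 1/2. -/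
open MeasureTheory Real Set Filter Topology Finset

/-- The (real value of the) analytically continued Riemann zeta function at a real point. -/
noncomputable def zetaR (x : ℝ) : ℝ := (riemannZeta (x : ℂ)).re

/-- Mean value estimate: `α b^{-(1+α)} ≤ (b-1)^{-α} - b^{-α}` for `b ≥ 2`. -/
lemma keyIneq {α : ℝ} (hα : 0 < α) {b : ℝ} (hb : 2 ≤ b) :
    α * b ^ (-(1 + α)) ≤ (b - 1) ^ (-α) - b ^ (-α) := by
  have hb1 : (1:ℝ) ≤ b - 1 := by linarith
  have hlt : b - 1 < b := by linarith
  have hderiv : ∀ x ∈ Set.Ioo (b - 1) b,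
      HasDerivAt (fun y : ℝ => y ^ (-α)) (-α * x ^ (-α - 1)) x := by
    intro x hx
    exact Real.hasDerivAt_rpow_const (Or.inl (by nlinarith [hx.1]))
  have hcont : ContinuousOn (fun y : ℝ => y ^ (-α)) (Set.Icc (b - 1) b) := by
    intro x hx
    have hx0 : x ≠ 0 := by nlinarith [hx.1]
    exact (Real.continuousAt_rpow_const x (-α) (Or.inl hx0)).continuousWithinAt
  obtain ⟨c, hc, hceq⟩ := exists_hasDerivAt_eq_slope (fun y : ℝ => y ^ (-α))
    (fun x => -α * x ^ (-α - 1)) hlt hcont hderiv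
  have hcb : c ≤ b := hc.2.le
  have hc0 : 0 < c := by nlinarith [hc.1]
  have hslope : b ^ (-α) - (b - 1) ^ (-α) = -α * c ^ (-α - 1) := by
    rw [hceq]; field_simp; ring
  have hmono : b ^ (-α - 1) ≤ c ^ (-α - 1) :=
    Real.rpow_le_rpow_of_nonpos hc0 hcb (by linarith)
  have hrw : b ^ (-(1 + α)) = b ^ (-α - 1) := by ring_nf
  rw [hrw]
  nlinarith [hmono, hslope]

/-- Full-weight sum bound: `∑_{k=1}^N k^{-(1+α)} + N^{-α}/α ≤ 1 + 1/α`. -/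
lemma fullSum {α : ℝ} (hα : 0 < α) (N : ℤ) (hN : 1 ≤ N) :
    (∑ k ∈ Finset.Icc (1:ℤ) N, ((k:ℝ)) ^ (-(1 + α))) + (N:ℝ) ^ (-α) / α ≤ 1 + 1 / α := by
  refine Int.le_induction (motive := fun N _ => (∑ k ∈ Finset.Icc (1:ℤ) N, ((k:ℝ)) ^ (-(1 + α)))
      + (N:ℝ) ^ (-α) / α ≤ 1 + 1 / α) ?_ ?_ N hN
  · simp [Real.one_rpow]
  · intro n hn ih
    have hins : Finset.Icc (1:ℤ) (n + 1) = insert (n + 1) (Finset.Icc (1:ℤ) n) := by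
      ext k; simp [Finset.mem_Icc]; omega
    have hnot : (n + 1) ∉ Finset.Icc (1:ℤ) n := by simp [Finset.mem_Icc]
    rw [hins, Finset.sum_insert hnot]
    have hb2 : (2:ℝ) ≤ ((n:ℝ) + 1) := by
      have : (1:ℝ) ≤ (n:ℝ) := by exact_mod_cast hn
      linarith
    have hkey := keyIneq hα hb2
    have hb1 : ((n:ℝ) + 1) - 1 = (n:ℝ) := by ring
    rw [hb1] at hkey
    have hcast : (((n:ℤ) + 1 : ℤ) : ℝ) = (n:ℝ) + 1 := by push_cast; ring
    rw [hcast]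
    have h2 : ((n:ℝ) + 1) ^ (-(1 + α)) ≤ ((n:ℝ) ^ (-α) - ((n:ℝ) + 1) ^ (-α)) / α := by
      rw [le_div_iff₀ hα]; linarith [hkey]
    have h3 : ((n:ℝ) ^ (-α) - ((n:ℝ) + 1) ^ (-α)) / α
        = (n:ℝ) ^ (-α) / α - ((n:ℝ) + 1) ^ (-α) / α := by ring
    rw [h3] at h2
    linarith [ih]

/-- Half-end-weight sum bound. -/
lemma halfSum {α : ℝ} (hα : 0 < α) (N : ℤ) (hN : 1 ≤ N) :
    (∑ k ∈ Finset.Icc (1:ℤ) N, (if k = N then (1/2:ℝ) else 1) * (k:ℝ) ^ (-(1 + α)))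
      + (N:ℝ) ^ (-α) / α ≤ 1 + 1 / α := by
  have hle : (∑ k ∈ Finset.Icc (1:ℤ) N, (if k = N then (1/2:ℝ) else 1) * (k:ℝ) ^ (-(1 + α)))
      ≤ ∑ k ∈ Finset.Icc (1:ℤ) N, ((k:ℝ)) ^ (-(1 + α)) := by
    apply Finset.sum_le_sum
    intro k hk
    have hk1 : (0:ℝ) ≤ (k:ℝ) := by
      rw [Finset.mem_Icc] at hk
      exact_mod_cast le_trans zero_le_one hk.1
    have hpos : (0:ℝ) ≤ (k:ℝ) ^ (-(1 + α)) := Real.rpow_nonneg hk1 _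
    have hw : (if k = N then (1/2:ℝ) else 1) ≤ 1 := by split <;> norm_num
    calc (if k = N then (1/2:ℝ) else 1) * (k:ℝ) ^ (-(1 + α))
        ≤ 1 * (k:ℝ) ^ (-(1 + α)) := mul_le_mul_of_nonneg_right hw hpos
      _ = (k:ℝ) ^ (-(1 + α)) := one_mul _
  linarith [fullSum hα N hN]

/-- Splitting a symmetric-ish integer sum into negative and positive parts. -/
lemma splitSum (Q P : ℤ) (hQ : 1 ≤ Q) (hP : 1 ≤ P) (f : ℤ → ℝ) :
    ∑ k ∈ (Finset.Icc (-Q) P).erase 0, f k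
      = (∑ k ∈ Finset.Icc (1:ℤ) Q, f (-k)) + ∑ k ∈ Finset.Icc (1:ℤ) P, f k := by
  have hset : (Finset.Icc (-Q) P).erase 0 = Finset.Icc (-Q) (-1) ∪ Finset.Icc 1 P := by
    ext k
    simp only [Finset.mem_erase, Finset.mem_Icc, Finset.mem_union]
    omega
  have hdisj : Disjoint (Finset.Icc (-Q) (-1)) (Finset.Icc (1:ℤ) P) := by
    rw [Finset.disjoint_left]
    intro k hk hk'
    simp only [Finset.mem_Icc] at hk hk'
    omega
  rw [hset, Finset.sum_union hdisj]
  congr 1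
  refine Finset.sum_nbij' (fun k => -k) (fun k => -k) ?_ ?_ ?_ ?_ ?_
  · intro a ha; simp only [Finset.mem_Icc] at *; omega
  · intro a ha; simp only [Finset.mem_Icc] at *; omega
  · intro a _; ring
  · intro a _; ring
  · intro a _; simp

/-- key CFL inequality: under the CFL condition
`Δt/h^α ≤ 1/(2M̃^α c(1,α)(1 + 1/α - ζ(α-1)))`, for every `|j| < J` the quantity
`L̂_j = -2Δt c(x_j)ζ(α-1)h^{-α} + (c(x_j)Δt/α)[(1+x_j)^{-α}+(1-x_j)^{-α}]
  + c(x_j)Δt h ∑″_{k=-J-j,k≠0}^{J-j} |kh|^{-1-α}`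
is at most `1`, where `c(x) = c(1,α)|σ(x)|^α` and the two end terms of the sum carry
weight `1/2`. -/
theorem stmt_15 (α : ℝ) (hα : α ∈ Set.Ioo (0:ℝ) 2)
    (J : ℤ) (hJ : 2 ≤ J) (h : ℝ) (hh : h = 1 / (J : ℝ))
    (Mt : ℝ) (hMt : 0 < Mt) (σ : ℝ → ℝ) (hσ : ∀ x, |σ x| ≤ Mt)
    (Δt : ℝ) (hΔt : 0 < Δt)
    (hCFL : Δt / h ^ α ≤ 1 / (2 * Mt ^ α * c1 α * (1 + 1 / α - zetaR (α - 1))))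
    (j : ℤ) (hj : |j| < J) :
    -2 * Δt * (c1 α * |σ ((j : ℝ) * h)| ^ α) * zetaR (α - 1) * h ^ (-α)
      + (c1 α * |σ ((j : ℝ) * h)| ^ α) * Δt / α *
          ((1 + (j : ℝ) * h) ^ (-α) + (1 - (j : ℝ) * h) ^ (-α))
      + (c1 α * |σ ((j : ℝ) * h)| ^ α) * Δt * h *
          ∑ k ∈ (Finset.Icc (-J - j) (J - j)).erase 0,
            (if k = -J - j ∨ k = J - j then (1/2 : ℝ) else 1) * |(k : ℝ) * h| ^ (-(1 + α))
      ≤ 1 := by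
  obtain ⟨hα0, hα2⟩ := hα
  have hJpos : (0:ℝ) < (J:ℝ) := by exact_mod_cast lt_of_lt_of_le (by norm_num) hJ
  have hJne : (J:ℝ) ≠ 0 := ne_of_gt hJpos
  have hhpos : 0 < h := by rw [hh]; positivity
  have hc1 : 0 < c1 α := by
    have h1 : 0 < Real.Gamma ((1 + α) / 2) := Real.Gamma_pos_of_pos (by linarith)
    have h2 : 0 < Real.Gamma (1 - α / 2) := Real.Gamma_pos_of_pos (by linarith)
    have h3 : (0:ℝ) < Real.sqrt π := Real.sqrt_pos.mpr pi_pos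
    have h4 : (0:ℝ) < (2:ℝ) ^ (1 - α) := Real.rpow_pos_of_pos two_pos _
    exact div_pos (mul_pos hα0 h1) (mul_pos (mul_pos h4 h3) h2)
  set ζ := zetaR (α - 1) with hζ
  set c := c1 α * |σ ((j : ℝ) * h)| ^ α with hc
  set CM := c1 α * Mt ^ α with hCM
  have hc0 : 0 ≤ c := by
    rw [hc]; exact mul_nonneg hc1.le (Real.rpow_nonneg (abs_nonneg _) _)
  have hcCM : c ≤ CM := by
    rw [hc, hCM]
    exact mul_le_mul_of_nonneg_left
      (Real.rpow_le_rpow (abs_nonneg _) (hσ _) hα0.le) hc1.le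
  have hCMpos : 0 < CM := by
    rw [hCM]; exact mul_pos hc1 (Real.rpow_pos_of_pos hMt _)
  set B := 1 + 1 / α - ζ with hB
  have hBpos : 0 < B := by
    by_contra hB'
    push_neg at hB'
    have hMa : (0:ℝ) < Mt ^ α := Real.rpow_pos_of_pos hMt _
    have hD : 2 * Mt ^ α * c1 α * B ≤ 0 :=
      mul_nonpos_of_nonneg_of_nonpos (by positivity) hB'
    have h1 : (0:ℝ) < Δt / h ^ α := div_pos hΔt (Real.rpow_pos_of_pos hhpos α)
    have h2 : 1 / (2 * Mt ^ α * c1 α * B) ≤ 0 := by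
      apply div_nonpos_of_nonneg_of_nonpos zero_le_one hD
    linarith
  have hjabs := abs_lt.mp hj
  set P := J - j with hPdef
  set Q := J + j with hQdef
  have hP1 : 1 ≤ P := by omega
  have hQ1 : 1 ≤ Q := by omega
  rw [show -J - j = -Q by omega]
  rw [splitSum Q P hQ1 hP1]
  set HP := ∑ k ∈ Finset.Icc (1:ℤ) P, (if k = P then (1/2:ℝ) else 1) * (k:ℝ) ^ (-(1 + α))
    with hHP
  set HQ := ∑ k ∈ Finset.Icc (1:ℤ) Q, (if k = Q then (1/2:ℝ) else 1) * (k:ℝ) ^ (-(1 + α))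
    with hHQ
  have hnegSide : (∑ k ∈ Finset.Icc (1:ℤ) Q,
      (if -k = -Q ∨ -k = P then (1/2:ℝ) else 1) * |((-k : ℤ) : ℝ) * h| ^ (-(1 + α)))
      = HQ * h ^ (-(1 + α)) := by
    rw [hHQ, Finset.sum_mul]
    apply Finset.sum_congr rfl
    intro k hk
    rw [Finset.mem_Icc] at hk
    have hk1 : (1:ℝ) ≤ (k:ℝ) := by exact_mod_cast hk.1
    have hcond : (-k = -Q ∨ -k = P) ↔ k = Q := by omega
    have habs : |((-k : ℤ) : ℝ) * h| = (k:ℝ) * h := by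
      push_cast
      rw [show -(k:ℝ) * h = -((k:ℝ) * h) by ring, abs_neg,
        abs_of_nonneg (mul_nonneg (by linarith) hhpos.le)]
    rw [habs, Real.mul_rpow (by linarith) hhpos.le]
    simp only [hcond]
    ring
  have hposSide : (∑ k ∈ Finset.Icc (1:ℤ) P,
      (if k = -Q ∨ k = P then (1/2:ℝ) else 1) * |(k : ℝ) * h| ^ (-(1 + α)))
      = HP * h ^ (-(1 + α)) := by
    rw [hHP, Finset.sum_mul]
    apply Finset.sum_congr rfl
    intro k hk
    rw [Finset.mem_Icc] at hk
    have hk1 : (1:ℝ) ≤ (k:ℝ) := by exact_mod_cast hk.1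
    have hcond : (k = -Q ∨ k = P) ↔ k = P := by omega
    have habs : |(k : ℝ) * h| = (k:ℝ) * h :=
      abs_of_nonneg (mul_nonneg (by linarith) hhpos.le)
    rw [habs, Real.mul_rpow (by linarith) hhpos.le]
    simp only [hcond]
    ring
  rw [hnegSide, hposSide]
  have hx1 : 1 + (j:ℝ) * h = (Q:ℝ) * h := by
    rw [hh, hQdef]; push_cast; field_simp
  have hx2 : 1 - (j:ℝ) * h = (P:ℝ) * h := by
    rw [hh, hPdef]; push_cast; field_simp
  have hQr0 : (0:ℝ) ≤ (Q:ℝ) := by exact_mod_cast le_trans zero_le_one hQ1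
  have hPr0 : (0:ℝ) ≤ (P:ℝ) := by exact_mod_cast le_trans zero_le_one hP1
  rw [hx1, hx2, Real.mul_rpow hQr0 hhpos.le, Real.mul_rpow hPr0 hhpos.le]
  have hhh : h * h ^ (-(1 + α)) = h ^ (-α) := by
    rw [show (-α : ℝ) = 1 + -(1 + α) by ring, Real.rpow_add hhpos, Real.rpow_one]
  have hE : c * (-2 * ζ + ((Q:ℝ) ^ (-α) / α + HQ) + ((P:ℝ) ^ (-α) / α + HP))
      ≤ CM * (2 * B) := by
    have e1 := halfSum hα0 Q hQ1
    have e2 := halfSum hα0 P hP1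
    rw [← hHQ] at e1
    rw [← hHP] at e2
    have e3 : -2 * ζ + ((Q:ℝ) ^ (-α) / α + HQ) + ((P:ℝ) ^ (-α) / α + HP) ≤ 2 * B := by
      rw [hB]; linarith
    calc c * (-2 * ζ + ((Q:ℝ) ^ (-α) / α + HQ) + ((P:ℝ) ^ (-α) / α + HP))
        ≤ c * (2 * B) := mul_le_mul_of_nonneg_left e3 hc0
      _ ≤ CM * (2 * B) := mul_le_mul_of_nonneg_right hcCM (by linarith)
  have hDpos : 0 < 2 * Mt ^ α * c1 α * B :=
    mul_pos (mul_pos (mul_pos two_pos (Real.rpow_pos_of_pos hMt α)) hc1) hBpos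
  have main : Δt * h ^ (-α) *
      (c * (-2 * ζ + ((Q:ℝ) ^ (-α) / α + HQ) + ((P:ℝ) ^ (-α) / α + HP))) ≤ 1 := by
    have step : Δt * h ^ (-α) * (CM * (2 * B)) = (Δt / h ^ α) * (2 * Mt ^ α * c1 α * B) := by
      rw [Real.rpow_neg hhpos.le, hCM, div_eq_mul_inv]; ring
    calc Δt * h ^ (-α) *
        (c * (-2 * ζ + ((Q:ℝ) ^ (-α) / α + HQ) + ((P:ℝ) ^ (-α) / α + HP)))
        ≤ Δt * h ^ (-α) * (CM * (2 * B)) := by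
          apply mul_le_mul_of_nonneg_left hE
          positivity
      _ = (Δt / h ^ α) * (2 * Mt ^ α * c1 α * B) := step
      _ ≤ (1 / (2 * Mt ^ α * c1 α * B)) * (2 * Mt ^ α * c1 α * B) :=
          mul_le_mul_of_nonneg_right hCFL hDpos.le
      _ = 1 := one_div_mul_cancel hDpos.ne'
  refine le_trans (le_of_eq ?_) main
  rw [← hhh]
  ring
end

section
/- (Proposition: discrete maximum principle for the absorbing boundary condition, f = g = 0.) Let α ∈ (0,2), J ≥ 2 an integer, h = 1/J, x_j = jh, M̃ > 0, σ : ℝ → ℝ with |σ(x)| ≤ M̃ for all x, c(x) := c(1,α)|σ(x)|^α, and M > 0. Suppose Δt > 0 satisfies the CFL condition Δt/h^α ≤ 1/( 2 M̃^α c(1,α) (1 + 1/α − ζ(α−1)) ). Let (U^n_j)_{|j|≤J} satisfy 0 ≤ U^n_j ≤ M for |j| < J and U^n_j = 0 for |j| = J, and for |j| < J define the explicit Euler update U^{n+1}_j := U^n_j − Δt c(x_j) ζ(α−1) h^{−α} (U^n_{j+1} − 2U^n_j + U^n_{j−1}) − (c(x_j)Δt/α)[(1+x_j)^{−α} + (1−x_j)^{−α}]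 U^n_j + c(x_j) Δt h ∑″_{k=−J−j, k≠0}^{J−j} (U^n_{j+k} − U^n_j) |kh|^{−1−α}, where ∑″ gives weight 1/2 to the two end terms k = −J−j and k = J−j. Then 0 ≤ U^{n+1}_j ≤ M for every |j| < J; i.e., the scheme satisfies the discrete maximum principle. -/
open MeasureTheory Real Set Filter Topology Finset

lemma aux_L0 {α y : ℝ} (hα : 0 < α) (hy : 0 < y) :
    (y + 1) ^ (-(1 + α)) ≤ (y ^ (-α) - (y + 1) ^ (-α)) / α := by
  set x := y + 1 with hx
  have hx0 : 0 < x := by positivity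
  have ht0 : 0 < y / x := by positivity
  have ht1 : y / x < 1 := by
    rw [div_lt_one hx0]; linarith
  have key : 1 + α * (1 - y / x) ≤ (y / x) ^ (-α) := by
    rw [Real.rpow_def_of_pos ht0]
    have h1 : Real.log (y / x) ≤ y / x - 1 := Real.log_le_sub_one_of_pos ht0
    have h2 : Real.log (y / x) * (-α) + 1 ≤ Real.exp (Real.log (y / x) * (-α)) :=
      Real.add_one_le_exp _
    nlinarith [mul_le_mul_of_nonneg_left h1 hα.le]
  have hsplit : y ^ (-α) = (y / x) ^ (-α) * x ^ (-α) := by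
    rw [← Real.mul_rpow ht0.le hx0.le, div_mul_cancel₀ _ hx0.ne']
  have hxpow : x ^ (-(1 + α)) = x ^ (-α) * x⁻¹ := by
    rw [← Real.rpow_neg_one x, ← Real.rpow_add hx0]
    congr 1; ring
  have h1mt : 1 - y / x = x⁻¹ := by
    field_simp
    rw [hx]
    ring
  rw [le_div_iff₀ hα]
  have hxa : 0 < x ^ (-α) := Real.rpow_pos_of_pos hx0 _
  calc x ^ (-(1 + α)) * α = α * x⁻¹ * x ^ (-α) := by rw [hxpow]; ring
    _ ≤ ((y / x) ^ (-α) - 1) * x ^ (-α) := by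
        apply mul_le_mul_of_nonneg_right _ hxa.le
        rw [← h1mt]; linarith
    _ = y ^ (-α) - x ^ (-α) := by rw [hsplit]; ring

lemma aux_L2 {β a b : ℝ} (hβ0 : 0 ≤ β) (hβ1 : β ≤ 1) (ha : 0 < a) (hab : a ≤ b) :
    β * b ^ (β - 1) * (b - a) ≤ b ^ β - a ^ β := by
  have hb : 0 < b := lt_of_lt_of_le ha hab
  have hv0 : 0 ≤ a / b := by positivity
  have key : (a / b) ^ β ≤ β * (a / b) + (1 - β) * 1 :=
    calc (a / b) ^ β = (a / b) ^ β * 1 ^ (1 - β) := by rw [Real.one_rpow, mul_one]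
      _ ≤ β * (a / b) + (1 - β) * 1 :=
          Real.geom_mean_le_arith_mean2_weighted hβ0 (by linarith) hv0 zero_le_one (by ring)
  have hsplit : a ^ β = (a / b) ^ β * b ^ β := by
    rw [← Real.mul_rpow hv0 hb.le, div_mul_cancel₀ _ hb.ne']
  have hbpow : b ^ (β - 1) = b ^ β * b⁻¹ := by
    rw [← Real.rpow_neg_one b, ← Real.rpow_add hb, sub_eq_add_neg]
  have hbb : 0 < b ^ β := Real.rpow_pos_of_pos hb _
  have h2 : a ^ β ≤ (β * (a / b) + (1 - β)) * b ^ β := by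
    rw [hsplit]
    apply mul_le_mul_of_nonneg_right _ hbb.le
    linarith [key]
  have h3 : (β * (a / b) + (1 - β)) * b ^ β = b ^ β - β * (b ^ β * b⁻¹) * (b - a) := by
    field_simp
    ring
  rw [hbpow]
  nlinarith [h2, h3]

lemma aux_summable {p : ℝ} (hp : 1 < p) : Summable (fun n : ℕ => ((n : ℝ) + 1) ^ (-p)) := by
  have h0 : Summable (fun n : ℕ => (n : ℝ) ^ (-p)) := Real.summable_nat_rpow.2 (by linarith)
  have h1 := (summable_nat_add_iff (f := fun n : ℕ => (n : ℝ) ^ (-p)) 1).2 h0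
  refine h1.congr fun n => ?_
  push_cast
  ring_nf

lemma zeta_real_of_one_lt {s : ℝ} (hs : 1 < s) :
    riemannZeta (s : ℂ) = ((∑' n : ℕ, ((n : ℝ) + 1) ^ (-s) : ℝ) : ℂ) ∧
      0 < (∑' n : ℕ, ((n : ℝ) + 1) ^ (-s) : ℝ) := by
  have hsum : Summable (fun n : ℕ => ((n : ℝ) + 1) ^ (-s)) := aux_summable hs
  constructor
  · rw [zeta_eq_tsum_one_div_nat_add_one_cpow (by simpa using hs), Complex.ofReal_tsum]
    congr 1
    ext n
    have h0 : (0:ℝ) ≤ (n : ℝ) + 1 := by positivity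
    have hcast : ((n:ℂ) + 1) = (((n:ℝ) + 1 : ℝ) : ℂ) := by push_cast; ring
    rw [hcast, ← Complex.ofReal_cpow h0 s, Real.rpow_neg h0, Complex.ofReal_inv, one_div]
  · refine Summable.tsum_pos hsum (fun n => by positivity) 0 ?_
    norm_num


noncomputable def Fz (n : ℕ) (s : ℂ) : ℂ :=
  (1 - s) * ((n:ℂ) + 1) ^ (-s) - (((n:ℂ) + 2) ^ (1 - s) - ((n:ℂ) + 1) ^ (1 - s))

lemma cast_ne1 (n : ℕ) : ((n:ℂ) + 1) ≠ 0 := by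
  have : ((n:ℝ) + 1) ≠ 0 := by positivity
  intro h
  apply this
  exact_mod_cast congrArg Complex.re h

lemma cast_ne2 (n : ℕ) : ((n:ℂ) + 2) ≠ 0 := by
  have : ((n:ℝ) + 2) ≠ 0 := by positivity
  intro h
  apply this
  exact_mod_cast congrArg Complex.re h

lemma Fz_diff (n : ℕ) : Differentiable ℂ (Fz n) := by
  have h1 : Differentiable ℂ (fun s : ℂ => ((n:ℂ) + 1) ^ (-s)) :=
    fun s => (differentiable_id.neg s).const_cpow (Or.inl (cast_ne1 n))
  have h2 : Differentiable ℂ (fun s : ℂ => ((n:ℂ) + 2) ^ (1 - s)) :=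
    fun s => ((differentiable_const 1).sub differentiable_id |>.differentiableAt).const_cpow
      (Or.inl (cast_ne2 n))
  have h3 : Differentiable ℂ (fun s : ℂ => ((n:ℂ) + 1) ^ (1 - s)) :=
    fun s => ((differentiable_const 1).sub differentiable_id |>.differentiableAt).const_cpow
      (Or.inl (cast_ne1 n))
  exact (((differentiable_const 1).sub differentiable_id).mul h1).sub (h2.sub h3)

lemma Fz_bound (n : ℕ) {s : ℂ} (hs : 0 < s.re) :
    ‖Fz n s‖ ≤ ‖1 - s‖ * ‖s‖ * ((n:ℝ) + 1) ^ (-s.re - 1) := by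
  set a : ℝ := (n:ℝ) + 1 with ha_def
  set b : ℝ := (n:ℝ) + 2 with hb_def
  have ha : 0 < a := by rw [ha_def]; positivity
  have hab : a ≤ b := by rw [ha_def, hb_def]; linarith
  set C : ℝ := ‖s‖ * a ^ (-s.re - 1) with hC_def
  have hC0 : 0 ≤ C := by
    rw [hC_def]
    positivity
  set φ : ℝ → ℂ := fun x => ((x:ℝ):ℂ) ^ (-s) with hφ_def
  -- derivative of φ
  have hφd : ∀ x ∈ Icc a b, HasDerivWithinAt φ ((-s) * ((x:ℝ):ℂ) ^ (-s - 1)) (Icc a b) x := by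
    intro x hx
    have hx0 : 0 < x := lt_of_lt_of_le ha hx.1
    have h := ((Complex.hasStrictDerivAt_cpow_const (c := -s)
      (Complex.ofReal_mem_slitPlane.2 hx0)).hasDerivAt).comp_ofReal
    exact h.hasDerivWithinAt
  -- bound for φ'
  have hφb : ∀ x ∈ Icc a b, ‖(-s) * ((x:ℝ):ℂ) ^ (-s - 1)‖ ≤ C := by
    intro x hx
    have hx0 : 0 < x := lt_of_lt_of_le ha hx.1
    rw [norm_mul, norm_neg, hC_def]
    apply mul_le_mul_of_nonneg_left _ (norm_nonneg s)
    rw [Complex.norm_cpow_eq_rpow_re_of_pos hx0]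
    have hre : (-s - 1).re = -s.re - 1 := by simp
    rw [hre]
    exact Real.rpow_le_rpow_of_nonpos ha hx.1 (by linarith)
  -- inner MVT
  have hφmvt : ∀ x ∈ Icc a b, ‖φ x - φ a‖ ≤ C * ‖x - a‖ :=
    fun x hx => Convex.norm_image_sub_le_of_norm_hasDerivWithin_le hφd hφb (convex_Icc a b)
      (left_mem_Icc.2 hab) hx
  -- outer function
  set ψ : ℝ → ℂ := fun x => (1 - s) * ((a:ℝ):ℂ) ^ (-s) * ((x:ℝ):ℂ) - ((x:ℝ):ℂ) ^ (1 - s)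
    with hψ_def
  have hψd : ∀ x ∈ Icc a b,
      HasDerivWithinAt ψ ((1 - s) * (φ a - φ x)) (Icc a b) x := by
    intro x hx
    have hx0 : 0 < x := lt_of_lt_of_le ha hx.1
    have h0 : HasDerivAt (fun y : ℝ => ((y:ℝ):ℂ)) 1 x := by
      exact Complex.ofRealCLM.hasDerivAt (x := x)
    have h1 : HasDerivAt (fun y : ℝ => (1 - s) * ((a:ℝ):ℂ) ^ (-s) * ((y:ℝ):ℂ))
        ((1 - s) * ((a:ℝ):ℂ) ^ (-s)) x := by
      simpa using h0.const_mul ((1 - s) * ((a:ℝ):ℂ) ^ (-s))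
    have h2 : HasDerivAt (fun y : ℝ => ((y:ℝ):ℂ) ^ (1 - s))
        ((1 - s) * ((x:ℝ):ℂ) ^ (-s)) x := by
      have h := ((Complex.hasStrictDerivAt_cpow_const (c := 1 - s)
        (Complex.ofReal_mem_slitPlane.2 hx0)).hasDerivAt).comp_ofReal
      have he : (1 - s - 1) = -s := by ring
      simpa [he] using h
    have := (h1.sub h2).hasDerivWithinAt (s := Icc a b)
    convert this using 1
    · rfl
    · rfl
    rw [hφ_def]
    ring
  have hψb : ∀ x ∈ Icc a b, ‖(1 - s) * (φ a - φ x)‖ ≤ ‖1 - s‖ * C := by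
    intro x hx
    rw [norm_mul]
    apply mul_le_mul_of_nonneg_left _ (norm_nonneg _)
    rw [norm_sub_rev]
    calc ‖φ x - φ a‖ ≤ C * ‖x - a‖ := hφmvt x hx
      _ ≤ C * 1 := by
          apply mul_le_mul_of_nonneg_left _ hC0
          rw [Real.norm_eq_abs, abs_of_nonneg (by linarith [hx.1])]
          have := hx.2
          rw [hb_def, ha_def] at *
          linarith
      _ = C := mul_one C
  have hψmvt : ‖ψ b - ψ a‖ ≤ (‖1 - s‖ * C) * ‖b - a‖ :=
    Convex.norm_image_sub_le_of_norm_hasDerivWithin_le hψd hψb (convex_Icc a b)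
      (left_mem_Icc.2 hab) (right_mem_Icc.2 hab)
  have hba : ‖b - a‖ = 1 := by
    rw [hb_def, ha_def]
    norm_num
  have hFz : Fz n s = ψ b - ψ a := by
    rw [Fz, hψ_def, ha_def, hb_def]
    push_cast
    ring
  rw [hFz]
  calc ‖ψ b - ψ a‖ ≤ (‖1 - s‖ * C) * ‖b - a‖ := hψmvt
    _ = ‖1 - s‖ * ‖s‖ * a ^ (-s.re - 1) := by rw [hba, hC_def]; ring

lemma Fz_summable {s : ℂ} (hs : 0 < s.re) : Summable (fun n => Fz n s) := by
  apply Summable.of_norm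
  have hb : Summable (fun n : ℕ => ‖1 - s‖ * ‖s‖ * ((n:ℝ) + 1) ^ (-(1 + s.re))) :=
    (aux_summable (by linarith)).mul_left _
  apply Summable.of_nonneg_of_le (fun n => norm_nonneg _) _ hb
  intro n
  have h := Fz_bound n hs
  have he : -s.re - 1 = -(1 + s.re) := by ring
  rwa [he] at h

noncomputable def Hz (s : ℂ) : ℂ := ∑' n, Fz n s

lemma tendsto_cpow_zero {s : ℂ} (hs : 1 < s.re) :
    Tendsto (fun N : ℕ => ((N:ℂ) + 1) ^ (1 - s)) atTop (𝓝 0) := by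
  rw [tendsto_zero_iff_norm_tendsto_zero]
  have hN : Tendsto (fun N : ℕ => (N:ℝ) + 1) atTop atTop :=
    tendsto_atTop_add_const_right _ 1 tendsto_natCast_atTop_atTop
  have h0 : Tendsto (fun x : ℝ => x ^ (-(s.re - 1))) atTop (𝓝 0) :=
    tendsto_rpow_neg_atTop (by linarith)
  have h1 := h0.comp hN
  apply h1.congr
  intro N
  have hpos : (0:ℝ) < (N:ℝ) + 1 := by positivity
  have hcast : ((N:ℂ) + 1) = ((((N:ℝ) + 1) : ℝ) : ℂ) := by push_cast; ring
  rw [Function.comp_apply, hcast,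
    Complex.norm_cpow_eq_rpow_re_of_pos hpos]
  congr 1
  simp

lemma Hz_identity {s : ℂ} (hs : 1 < s.re) : Hz s = (1 - s) * riemannZeta s + 1 := by
  have hs0 : 0 < s.re := by linarith
  have hsum : Summable (fun n => Fz n s) := Fz_summable hs0
  have h1 : Tendsto (fun N => ∑ n ∈ Finset.range N, Fz n s) atTop (𝓝 (Hz s)) :=
    hsum.hasSum.tendsto_sum_nat
  have hzsum : Summable (fun n : ℕ => ((n:ℂ) + 1) ^ (-s)) := by
    apply Summable.of_norm
    apply Summable.of_nonneg_of_le (fun n => norm_nonneg _) _ (aux_summable hs)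
    intro n
    have h0 : (0:ℝ) < (n:ℝ) + 1 := by positivity
    have hcast : ((n:ℂ) + 1) = ((((n:ℝ) + 1) : ℝ) : ℂ) := by push_cast; ring
    rw [hcast, Complex.norm_cpow_eq_rpow_re_of_pos h0]
    simp
  have hzeta : riemannZeta s = ∑' n : ℕ, ((n:ℂ) + 1) ^ (-s) := by
    rw [zeta_eq_tsum_one_div_nat_add_one_cpow hs]
    congr 1
    ext n
    rw [Complex.cpow_neg, one_div]
  have htel : ∀ N : ℕ, ∑ n ∈ Finset.range N, (((n:ℂ) + 2) ^ (1 - s) - ((n:ℂ) + 1) ^ (1 - s)) =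
      ((N:ℂ) + 1) ^ (1 - s) - 1 := by
    intro N
    have h := Finset.sum_range_sub (fun n : ℕ => ((n:ℂ) + 1) ^ (1 - s)) N
    have h2 : ∑ n ∈ Finset.range N, (((n:ℂ) + 2) ^ (1 - s) - ((n:ℂ) + 1) ^ (1 - s)) =
        ∑ n ∈ Finset.range N, ((((n + 1 : ℕ):ℂ) + 1) ^ (1 - s) - ((n:ℂ) + 1) ^ (1 - s)) := by
      apply Finset.sum_congr rfl
      intro n _
      congr 2
      push_cast
      ring
    rw [h2, h]
    norm_num
  have hps : ∀ N : ℕ, ∑ n ∈ Finset.range N, Fz n s =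
      (1 - s) * (∑ n ∈ Finset.range N, ((n:ℂ) + 1) ^ (-s)) - (((N:ℂ) + 1) ^ (1 - s) - 1) := by
    intro N
    rw [show (fun n => Fz n s) = fun n : ℕ => ((1 - s) * ((n:ℂ) + 1) ^ (-s) -
        (((n:ℂ) + 2) ^ (1 - s) - ((n:ℂ) + 1) ^ (1 - s))) from rfl, Finset.sum_sub_distrib,
      htel N, ← Finset.mul_sum]
  have h2 : Tendsto (fun N => ∑ n ∈ Finset.range N, Fz n s) atTop
      (𝓝 ((1 - s) * (∑' n : ℕ, ((n:ℂ) + 1) ^ (-s)) - ((0:ℂ) - 1))) := by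
    have ha : Tendsto (fun N => (1 - s) * (∑ n ∈ Finset.range N, ((n:ℂ) + 1) ^ (-s))) atTop
        (𝓝 ((1 - s) * (∑' n : ℕ, ((n:ℂ) + 1) ^ (-s)))) :=
      hzsum.hasSum.tendsto_sum_nat.const_mul _
    have hb : Tendsto (fun N : ℕ => (((N:ℂ) + 1) ^ (1 - s) - 1)) atTop (𝓝 ((0:ℂ) - 1)) :=
      (tendsto_cpow_zero hs).sub tendsto_const_nhds
    exact Tendsto.congr (fun N => (hps N).symm) (ha.sub hb)
  have := tendsto_nhds_unique h1 h2
  rw [this, ← hzeta]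
  ring

lemma Hz_analytic : AnalyticOnNhd ℂ Hz {z : ℂ | 0 < z.re} := by
  have hopen : IsOpen {z : ℂ | 0 < z.re} := isOpen_lt continuous_const Complex.continuous_re
  apply DifferentiableOn.analyticOnNhd _ hopen
  have hlu : TendstoLocallyUniformlyOn (fun N s => ∑ n ∈ Finset.range N, Fz n s) Hz
      atTop {z : ℂ | 0 < z.re} := by
    rw [tendstoLocallyUniformlyOn_iff_forall_isCompact hopen]
    intro K hK hKc
    rcases K.eq_empty_or_nonempty with rfl | hne
    · exact tendstoUniformlyOn_empty
    obtain ⟨z₀, hz₀K, hz₀min⟩ := hKc.exists_isMinOn hne Complex.continuous_re.continuousOn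
    have hδ : 0 < z₀.re := hK hz₀K
    obtain ⟨C, hC⟩ := hKc.exists_bound_of_continuousOn continuous_id.continuousOn
    have hC0 : 0 ≤ C := le_trans (norm_nonneg z₀) (hC z₀ hz₀K)
    apply tendstoUniformlyOn_tsum_nat
      (u := fun n : ℕ => (1 + C) * C * ((n:ℝ) + 1) ^ (-(1 + z₀.re)))
    · exact (aux_summable (by linarith)).mul_left _
    · intro n x hx
      have hxre : z₀.re ≤ x.re := hz₀min hx
      have hxre0 : 0 < x.re := lt_of_lt_of_le hδ hxre
      have hb := Fz_bound n hxre0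
      have hxC : ‖x‖ ≤ C := hC x hx
      have h1x : ‖1 - x‖ ≤ 1 + C := by
        calc ‖1 - x‖ ≤ ‖(1:ℂ)‖ + ‖x‖ := norm_sub_le _ _
          _ ≤ 1 + C := by rw [norm_one]; linarith
      have hrpow : ((n:ℝ) + 1) ^ (-x.re - 1) ≤ ((n:ℝ) + 1) ^ (-(1 + z₀.re)) := by
        apply Real.rpow_le_rpow_of_exponent_le (by push_cast; linarith [Nat.cast_nonneg (α := ℝ) n])
        linarith
      calc ‖Fz n x‖ ≤ ‖1 - x‖ * ‖x‖ * ((n:ℝ) + 1) ^ (-x.re - 1) := hb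
        _ ≤ (1 + C) * C * ((n:ℝ) + 1) ^ (-(1 + z₀.re)) := by
            apply mul_le_mul
            · exact mul_le_mul h1x hxC (norm_nonneg _) (by linarith)
            · exact hrpow
            · positivity
            · positivity
  apply hlu.differentiableOn _ hopen
  filter_upwards with N
  exact (Differentiable.fun_sum fun i _ => Fz_diff i).differentiableOn

noncomputable def Kz (s : ℂ) : ℂ := if s = 1 then 0 else (1 - s) * riemannZeta s + 1

lemma Kz_analytic : AnalyticOnNhd ℂ Kz {z : ℂ | 0 < z.re} := by
  have hdiff : ∀ z : ℂ, z ≠ 1 → DifferentiableAt ℂ Kz z := by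
    intro z hz
    have hev : (fun w => (1 - w) * riemannZeta w + 1) =ᶠ[𝓝 z] Kz := by
      filter_upwards [isOpen_ne.mem_nhds hz] with w hw
      rw [Kz, if_neg hw]
    apply (DifferentiableAt.congr_of_eventuallyEq _ hev.symm)
    exact (((differentiable_const (1:ℂ)).sub differentiable_id).differentiableAt.mul
      (differentiableAt_riemannZeta hz)).add (differentiableAt_const 1)
  intro s hs
  by_cases h1 : s = 1
  · subst h1
    apply Complex.analyticAt_of_differentiable_on_punctured_nhds_of_continuousAt
    · filter_upwards [self_mem_nhdsWithin] with z hz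
      exact hdiff z hz
    · rw [ContinuousAt, show Kz 1 = 0 from if_pos rfl,
        ← nhdsNE_sup_pure (1:ℂ), tendsto_sup]
      constructor
      · have h := riemannZeta_residue_one
        have h2 : Tendsto (fun s : ℂ => -((s - 1) * riemannZeta s) + 1) (𝓝[≠] 1)
            (𝓝 (-(1:ℂ) + 1)) := (h.neg).add tendsto_const_nhds
        have h3 : Tendsto (fun s : ℂ => -((s - 1) * riemannZeta s) + 1) (𝓝[≠] 1) (𝓝 0) := by
          simpa using h2
        apply h3.congr'
        filter_upwards [self_mem_nhdsWithin] with z hz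
        have hz1 : z ≠ 1 := hz
        rw [Kz, if_neg hz1]
        ring
      · have := tendsto_pure_nhds Kz (1:ℂ)
        rwa [show Kz 1 = 0 from if_pos rfl] at this
  · rw [Complex.analyticAt_iff_eventually_differentiableAt]
    filter_upwards [isOpen_ne.mem_nhds h1] with z hz
    exact hdiff z hz

lemma Hz_eq_Kz : Set.EqOn Hz Kz {z : ℂ | 0 < z.re} := by
  apply Hz_analytic.eqOn_of_preconnected_of_eventuallyEq Kz_analytic
    ((convex_halfSpace_re_gt (r := 0)).isPreconnected) (z₀ := 2) (by norm_num)
  have hopen : IsOpen {z : ℂ | 1 < z.re} := isOpen_lt continuous_const Complex.continuous_re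
  filter_upwards [hopen.mem_nhds (by norm_num : (2:ℂ) ∈ {z : ℂ | 1 < z.re})] with w hw
  have hw1 : w ≠ 1 := by
    intro h
    rw [h] at hw
    simp at hw
  rw [Hz_identity hw, Kz, if_neg hw1]

lemma zetaR_neg_of_pos {t : ℝ} (h0 : 0 < t) (h1 : t < 1) :
    zetaR t < 0 := by
  rw [zetaR]
  have hmem : ((t:ℝ) : ℂ) ∈ {z : ℂ | 0 < z.re} := by simpa using h0
  have ht1 : ((t:ℝ) : ℂ) ≠ 1 := by
    intro h
    have : t = 1 := by exact_mod_cast h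
    linarith
  have hKz : Kz ((t:ℝ):ℂ) = (1 - (t:ℂ)) * riemannZeta (t:ℂ) + 1 := if_neg ht1
  have hHK := Hz_eq_Kz hmem
  -- Hz at real t is real
  set g : ℕ → ℝ := fun n =>
    (1 - t) * ((n:ℝ) + 1) ^ (-t) - (((n:ℝ) + 2) ^ (1 - t) - ((n:ℝ) + 1) ^ (1 - t)) with hg_def
  have hFg : ∀ n : ℕ, Fz n ((t:ℝ):ℂ) = ((g n : ℝ) : ℂ) := by
    intro n
    rw [Fz, hg_def]
    have h0n : (0:ℝ) ≤ (n:ℝ) + 1 := by positivity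
    have h0n2 : (0:ℝ) ≤ (n:ℝ) + 2 := by positivity
    have e1 : ((n:ℂ) + 1) ^ (-(t:ℂ)) = ((((n:ℝ) + 1) ^ (-t) : ℝ) : ℂ) := by
      rw [Complex.ofReal_cpow h0n]
      push_cast
      ring_nf
    have e2 : ((n:ℂ) + 2) ^ (1 - (t:ℂ)) = ((((n:ℝ) + 2) ^ (1 - t) : ℝ) : ℂ) := by
      rw [Complex.ofReal_cpow h0n2]
      push_cast
      ring_nf
    have e3 : ((n:ℂ) + 1) ^ (1 - (t:ℂ)) = ((((n:ℝ) + 1) ^ (1 - t) : ℝ) : ℂ) := by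
      rw [Complex.ofReal_cpow h0n]
      push_cast
      ring_nf
    rw [e1, e2, e3]
    push_cast
    ring
  have hgsum : Summable g := by
    have := (Fz_summable (s := ((t:ℝ):ℂ)) (by simpa using h0))
    rw [show (fun n => Fz n ((t:ℝ):ℂ)) = (fun n => ((g n : ℝ) : ℂ)) from funext hFg] at this
    exact Complex.summable_ofReal.1 this
  have hHzt : Hz ((t:ℝ):ℂ) = ((∑' n, g n : ℝ) : ℂ) := by
    rw [Hz, show (fun n => Fz n ((t:ℝ):ℂ)) = (fun n => ((g n : ℝ) : ℂ)) from funext hFg,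
      Complex.ofReal_tsum]
  set T : ℝ := ∑' n, g n with hT_def
  -- T ≤ 1 - t via comparison with telescoping series
  set u : ℕ → ℝ := fun n => (1 - t) * ((n:ℝ) + 1) ^ (-t) with hu_def
  have hTle : T ≤ 1 - t := by
    have hterm : ∀ n : ℕ, g n ≤ u n - u (n + 1) := by
      intro n
      have hL2 := aux_L2 (β := 1 - t) (a := (n:ℝ) + 1) (b := (n:ℝ) + 2)
        (by linarith) (by linarith) (by positivity) (by linarith)
      have hb1 : ((n:ℝ) + 2) ^ ((1 - t) - 1) = ((n:ℝ) + 2) ^ (-t) := by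
        congr 1
        ring
      rw [hb1] at hL2
      have hcast : ((n:ℝ) + 1) + 1 = (n:ℝ) + 2 := by ring
      rw [hg_def, hu_def]
      simp only
      push_cast
      rw [hcast]
      nlinarith [hL2]
    have hu0 : ∀ n : ℕ, 0 ≤ u n - u (n + 1) := by
      intro n
      rw [hu_def]
      simp only
      have hmono : ((n:ℝ) + 1 + 1) ^ (-t) ≤ ((n:ℝ) + 1) ^ (-t) :=
        Real.rpow_le_rpow_of_nonpos (by positivity) (by linarith) (by linarith)
      have h2 := mul_le_mul_of_nonneg_left hmono (by linarith : (0:ℝ) ≤ 1 - t)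
      push_cast
      linarith
    have hpart : ∀ N : ℕ, ∑ n ∈ Finset.range N, (u n - u (n + 1)) = u 0 - u N :=
      fun N => Finset.sum_range_sub' u N
    have huN : Tendsto (fun N : ℕ => u N) atTop (𝓝 0) := by
      rw [hu_def]
      have hN : Tendsto (fun N : ℕ => (N:ℝ) + 1) atTop atTop :=
        tendsto_atTop_add_const_right _ 1 tendsto_natCast_atTop_atTop
      have h0' : Tendsto (fun x : ℝ => x ^ (-t)) atTop (𝓝 0) := tendsto_rpow_neg_atTop h0
      have := (h0'.comp hN).const_mul (1 - t)
      simpa using this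
    have husum : Summable (fun n => u n - u (n + 1)) := by
      apply summable_of_sum_range_le (c := u 0) hu0
      intro N
      rw [hpart N]
      have huNn : 0 ≤ u N := by
        rw [hu_def]
        have : (0:ℝ) ≤ ((N:ℝ) + 1) ^ (-t) := Real.rpow_pos_of_pos (by positivity) _ |>.le
        simp only
        nlinarith
      linarith
    have hulim : Tendsto (fun N => ∑ n ∈ Finset.range N, (u n - u (n + 1))) atTop
        (𝓝 (u 0 - 0)) := by
      rw [show (fun N => ∑ n ∈ Finset.range N, (u n - u (n + 1))) = fun N => u 0 - u N
        from funext hpart]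
      exact tendsto_const_nhds.sub huN
    have huhs : HasSum (fun n => u n - u (n + 1)) (u 0) := by
      have h := husum.hasSum
      have := tendsto_nhds_unique h.tendsto_sum_nat hulim
      rw [sub_zero] at this
      rwa [this] at h
    have hu0v : u 0 = 1 - t := by
      rw [hu_def]
      norm_num
    rw [← hu0v]
    exact hasSum_le hterm hgsum.hasSum huhs
  -- conclude
  have hzt : riemannZeta ((t:ℝ):ℂ) = (((T - 1) / (1 - t) : ℝ) : ℂ) := by
    have hne : (1:ℂ) - (t:ℂ) ≠ 0 := by
      intro h
      have : (1:ℝ) - t = 0 := by exact_mod_cast congrArg Complex.re h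
      linarith
    have heq : (1 - (t:ℂ)) * riemannZeta (t:ℂ) + 1 = ((T : ℝ) : ℂ) := by
      rw [← hKz, ← hHK, hHzt]
    have h2 : riemannZeta ((t:ℝ):ℂ) = (((T:ℝ):ℂ) - 1) / (1 - (t:ℂ)) := by
      rw [eq_div_iff hne]
      linear_combination heq
    rw [h2]
    push_cast
    ring
  rw [hzt, Complex.ofReal_re]
  apply div_neg_of_neg_of_pos
  · linarith
  · linarith

lemma zetaR_neg_of_neg {t : ℝ} (h1 : -1 < t) (h2 : t < 0) : zetaR t < 0 := by
  set s : ℝ := 1 - t with hs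
  have hs1 : 1 < s := by rw [hs]; linarith
  have hs2 : s < 2 := by rw [hs]; linarith
  obtain ⟨hzeq, hzpos⟩ := zeta_real_of_one_lt hs1
  set r : ℝ := ∑' n : ℕ, ((n : ℝ) + 1) ^ (-s) with hr
  have hfe : riemannZeta ((t : ℝ) : ℂ) =
      2 * (2 * (π:ℂ)) ^ (-(s:ℂ)) * Complex.Gamma (s:ℂ) *
        Complex.cos ((π:ℂ) * (s:ℂ) / 2) * riemannZeta (s:ℂ) := by
    have h1s : (1 : ℂ) - (s : ℝ) = ((t : ℝ) : ℂ) := by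
      rw [hs]; push_cast; ring
    rw [← h1s]
    apply riemannZeta_one_sub
    · intro n hn
      have : s = -(n : ℝ) := by exact_mod_cast hn
      have : (0:ℝ) ≤ (n:ℝ) := Nat.cast_nonneg n
      linarith
    · intro hn
      have : s = (1:ℝ) := by exact_mod_cast hn
      linarith
  -- convert RHS to a real number
  have hreal : riemannZeta ((t : ℝ) : ℂ) =
      ((2 * (2 * π) ^ (-s) * Real.Gamma s * Real.cos (π * s / 2) * r : ℝ) : ℂ) := by
    rw [hfe, hzeq]
    have hpow : ((2 * π : ℂ)) ^ (-(s:ℂ)) = (((2 * π) ^ (-s) : ℝ) : ℂ) := by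
      rw [Complex.ofReal_cpow (by positivity) (-s)]
      push_cast
      ring_nf
    rw [hpow]
    rw [Complex.Gamma_ofReal]
    have hcos : Complex.cos ((π:ℂ) * (s:ℂ) / 2) = ((Real.cos (π * s / 2) : ℝ) : ℂ) := by
      rw [Complex.ofReal_cos]
      push_cast
      ring_nf
    rw [hcos]
    push_cast
    ring
  have hcosneg : Real.cos (π * s / 2) < 0 := by
    apply Real.cos_neg_of_pi_div_two_lt_of_lt
    · have hπ : 0 < π := Real.pi_pos
      nlinarith
    · have hπ : 0 < π := Real.pi_pos
      nlinarith
  have hprod : (2 * (2 * π) ^ (-s) * Real.Gamma s * Real.cos (π * s / 2) * r : ℝ) < 0 := by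
    have h2π : (0:ℝ) < (2 * π) ^ (-s) := Real.rpow_pos_of_pos (by positivity) _
    have hΓ : 0 < Real.Gamma s := Real.Gamma_pos_of_pos (by linarith)
    have h3 : 0 < 2 * (2 * π) ^ (-s) * Real.Gamma s := by positivity
    exact mul_neg_of_neg_of_pos (mul_neg_of_pos_of_neg h3 hcosneg) hzpos
  rw [zetaR, hreal, Complex.ofReal_re]
  exact hprod

lemma zetaR_zero : zetaR 0 = -1/2 := by
  rw [zetaR]
  norm_num [riemannZeta_zero]


lemma zetaR_neg {t : ℝ} (h1 : -1 < t) (h2 : t < 1) : zetaR t < 0 := by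
  rcases lt_trichotomy t 0 with h | h | h
  · exact zetaR_neg_of_neg h1 h
  · rw [h, zetaR_zero]; norm_num
  · exact zetaR_neg_of_pos h h2

lemma c1_pos_s16 {α : ℝ} (h0 : 0 < α) (h2 : α < 2) : 0 < c1 α := by
  rw [c1]
  apply div_pos
  · exact mul_pos h0 (Real.Gamma_pos_of_pos (by linarith))
  · exact mul_pos (mul_pos (Real.rpow_pos_of_pos two_pos _) (Real.sqrt_pos.2 Real.pi_pos))
      (Real.Gamma_pos_of_pos (by linarith))

lemma aux_L1 {α : ℝ} (hα : 0 < α) (N : ℤ) (hN : 1 ≤ N) :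
    ∑ k ∈ Finset.Icc (1:ℤ) N, |(k:ℝ)| ^ (-(1 + α)) ≤ 1 + (1 - (N:ℝ) ^ (-α)) / α := by
  refine Int.le_induction (motive := fun N _ => ∑ k ∈ Finset.Icc (1:ℤ) N, |(k:ℝ)| ^ (-(1 + α)) ≤
    1 + (1 - (N:ℝ) ^ (-α)) / α) ?_ ?_ N hN
  · show (∑ k ∈ Finset.Icc (1:ℤ) 1, |(k:ℝ)| ^ (-(1 + α)) ≤
      1 + (1 - ((1:ℤ):ℝ) ^ (-α)) / α)
    rw [Finset.Icc_self, Finset.sum_singleton]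
    norm_num [Real.one_rpow]
  · intro N hN1 ih
    have hins : Finset.Icc (1:ℤ) (N + 1) = insert (N + 1) (Finset.Icc 1 N) := by
      ext k
      simp only [Finset.mem_Icc, Finset.mem_insert]
      omega
    have hnotin : (N + 1) ∉ Finset.Icc (1:ℤ) N := by
      simp only [Finset.mem_Icc]
      omega
    rw [hins, Finset.sum_insert hnotin]
    have hNr : (1:ℝ) ≤ (N:ℝ) := by exact_mod_cast hN1
    have hL0 := aux_L0 hα (show (0:ℝ) < (N:ℝ) by linarith)
    have hterm : |(N:ℝ) + 1| ^ (-(1 + α)) ≤ ((N:ℝ) ^ (-α) - ((N:ℝ) + 1) ^ (-α)) / α := by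
      rw [abs_of_pos (by linarith)]
      exact hL0
    push_cast
    have heq2 : ((N:ℝ) ^ (-α) - ((N:ℝ) + 1) ^ (-α)) / α + (1 + (1 - (N:ℝ) ^ (-α)) / α) =
        1 + (1 - ((N:ℝ) + 1) ^ (-α)) / α := by
      field_simp
      ring
    linarith [hterm, ih]

set_option maxHeartbeats 1600000 in
/-- discrete maximum principle, absorbing boundary, `f = g = 0`:
if `0 ≤ U^n_j ≤ M` for `|j| < J`, `U^n_j = 0` for `|j| = J`, and the CFL condition
holds, then the explicit Euler update of the modified-trapezoidal scheme satisfies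
`0 ≤ U^{n+1}_j ≤ M` for all `|j| < J`. -/
theorem stmt_16 (α : ℝ) (hα : α ∈ Set.Ioo (0:ℝ) 2)
    (J : ℤ) (hJ : 2 ≤ J) (h : ℝ) (hh : h = 1 / (J : ℝ))
    (Mt : ℝ) (hMt : 0 < Mt) (σ : ℝ → ℝ) (hσ : ∀ x, |σ x| ≤ Mt)
    (M : ℝ) (hM : 0 < M) (Δt : ℝ) (hΔt : 0 < Δt)
    (hCFL : Δt / h ^ α ≤ 1 / (2 * Mt ^ α * c1 α * (1 + 1 / α - zetaR (α - 1))))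
    (U Unext : ℤ → ℝ)
    (hU : ∀ j : ℤ, |j| < J → 0 ≤ U j ∧ U j ≤ M)
    (hUb : ∀ j : ℤ, |j| = J → U j = 0)
    (hUnext : ∀ j : ℤ, |j| < J → Unext j =
      U j
        - Δt * (c1 α * |σ ((j : ℝ) * h)| ^ α) * zetaR (α - 1) * h ^ (-α) *
            (U (j + 1) - 2 * U j + U (j - 1))
        - (c1 α * |σ ((j : ℝ) * h)| ^ α) * Δt / α *
            ((1 + (j : ℝ) * h) ^ (-α) + (1 - (j : ℝ) * h) ^ (-α)) * U j
        + (c1 α * |σ ((j : ℝ) * h)| ^ α) * Δt * h *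
            ∑ k ∈ (Finset.Icc (-J - j) (J - j)).erase 0,
              (if k = -J - j ∨ k = J - j then (1/2 : ℝ) else 1) *
                (U (j + k) - U j) * |(k : ℝ) * h| ^ (-(1 + α))) :
    ∀ j : ℤ, |j| < J → 0 ≤ Unext j ∧ Unext j ≤ M := by
  obtain ⟨hα0, hα2⟩ := hα
  intro j hjJ
  have hJ0 : (0:ℝ) < (J:ℝ) := by exact_mod_cast lt_of_lt_of_le (by norm_num) hJ
  have hh0 : 0 < h := by rw [hh]; positivity
  obtain ⟨hjl, hjr⟩ := abs_lt.1 hjJ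
  set z := zetaR (α - 1) with hz_def
  have hzneg : z < 0 := zetaR_neg (by linarith) (by linarith)
  have hc1 : 0 < c1 α := c1_pos_s16 hα0 hα2
  have heq := hUnext j hjJ
  set c := c1 α * |σ ((j:ℝ) * h)| ^ α with hc_def
  have hc0 : 0 ≤ c := by rw [hc_def]; positivity
  have hcle : c ≤ c1 α * Mt ^ α := by
    rw [hc_def]
    exact mul_le_mul_of_nonneg_left
      (Real.rpow_le_rpow (abs_nonneg _) (hσ _) hα0.le) hc1.le
  set K := (Finset.Icc (-J - j) (J - j)).erase 0 with hK_def
  set r : ℤ → ℝ := fun k =>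
    (if k = -J - j ∨ k = J - j then (1/2:ℝ) else 1) * |(k:ℝ) * h| ^ (-(1 + α)) with hr_def
  have hr_nonneg : ∀ k, 0 ≤ r k := by
    intro k
    rw [hr_def]
    dsimp only
    split_ifs <;> positivity
  have h1K : (1:ℤ) ∈ K := by
    rw [hK_def]
    simp only [Finset.mem_erase, Finset.mem_Icc]
    omega
  have hm1K : (-1:ℤ) ∈ K.erase 1 := by
    rw [hK_def]
    simp only [Finset.mem_erase, Finset.mem_Icc]
    omega
  set K2 := (K.erase 1).erase (-1) with hK2_def
  have hsum1 : ∑ k ∈ K, (if k = -J - j ∨ k = J - j then (1/2:ℝ) else 1) * (U (j + k) - U j) *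
      |(k:ℝ) * h| ^ (-(1 + α)) = ∑ k ∈ K, r k * U (j + k) - (∑ k ∈ K, r k) * U j := by
    rw [Finset.sum_mul, ← Finset.sum_sub_distrib]
    apply Finset.sum_congr rfl
    intro k _
    rw [hr_def]
    dsimp only
    ring
  have hsplitU : ∑ k ∈ K, r k * U (j + k) =
      r 1 * U (j + 1) + r (-1) * U (j - 1) + ∑ k ∈ K2, r k * U (j + k) := by
    rw [← Finset.add_sum_erase _ _ h1K, ← Finset.add_sum_erase _ _ hm1K, ← hK2_def,
      show j + (-1) = j - 1 from by ring]
    ring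
  have hsplitr : ∑ k ∈ K, r k = r 1 + r (-1) + ∑ k ∈ K2, r k := by
    rw [← Finset.add_sum_erase _ _ h1K, ← Finset.add_sum_erase _ _ hm1K, ← hK2_def]
    ring
  set E := Δt * c * z * h ^ (-α) with hE_def
  set A := (1 + (j:ℝ) * h) ^ (-α) with hA_def
  set Bb := (1 - (j:ℝ) * h) ^ (-α) with hB_def
  set Sf := ∑ k ∈ K, r k with hSf_def
  have hmain : Unext j = (1 + 2*E - c * Δt / α * (A + Bb) - c*Δt*h*Sf) * U j
      + (c*Δt*h * r 1 - E) * U (j+1) + (c*Δt*h * r (-1) - E) * U (j-1)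
      + c*Δt*h * (∑ k ∈ K2, r k * U (j + k)) := by
    rw [heq, hsum1, hsplitU, hsplitr]
    ring
  -- bounds on the data
  have hUin : ∀ k ∈ Finset.Icc (-J - j) (J - j), 0 ≤ U (j + k) ∧ U (j + k) ≤ M := by
    intro k hk
    rw [Finset.mem_Icc] at hk
    rcases lt_or_ge |j + k| J with hlt | hge
    · exact hU _ hlt
    · have habs : |j + k| ≤ J := abs_le.2 ⟨by omega, by omega⟩
      have : |j + k| = J := le_antisymm habs hge
      rw [hUb _ this]
      exact ⟨le_rfl, hM.le⟩
  have hU1 : 0 ≤ U (j+1) ∧ U (j+1) ≤ M := hUin 1 (by rw [Finset.mem_Icc]; omega)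
  have hUm1 : 0 ≤ U (j-1) ∧ U (j-1) ≤ M := by
    have := hUin (-1) (by rw [Finset.mem_Icc]; omega)
    rwa [show j + (-1) = j - 1 from by ring] at this
  have hUj : 0 ≤ U j ∧ U j ≤ M := hU j hjJ
  have hK2sub : ∀ k ∈ K2, k ∈ Finset.Icc (-J - j) (J - j) := by
    intro k hk
    rw [hK2_def] at hk
    have h2 := Finset.mem_of_mem_erase (Finset.mem_of_mem_erase hk)
    rw [hK_def] at h2
    exact Finset.mem_of_mem_erase h2
  -- sign facts
  have hhpos : 0 < h ^ (-α) := Real.rpow_pos_of_pos hh0 _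
  have hE0 : E ≤ 0 := by
    rw [hE_def]
    have h1 : 0 ≤ Δt * c := mul_nonneg hΔt.le hc0
    have h2 : Δt * c * z ≤ 0 := mul_nonpos_of_nonneg_of_nonpos h1 hzneg.le
    exact mul_nonpos_of_nonpos_of_nonneg h2 hhpos.le
  have hcdh : 0 ≤ c * Δt * h := mul_nonneg (mul_nonneg hc0 hΔt.le) hh0.le
  -- the key diagonal estimate
  have hP1 : (1:ℤ) ≤ J + j := by omega
  have hN1 : (1:ℤ) ≤ J - j := by omega
  have hPr : (0:ℝ) < ((J + j : ℤ):ℝ) := by exact_mod_cast lt_of_lt_of_le one_pos hP1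
  have hNr : (0:ℝ) < ((J - j : ℤ):ℝ) := by exact_mod_cast lt_of_lt_of_le one_pos hN1
  have hKsplit : K = Finset.Icc (-J - j) (-1) ∪ Finset.Icc 1 (J - j) := by
    rw [hK_def]
    ext k
    simp only [Finset.mem_erase, Finset.mem_Icc, Finset.mem_union]
    omega
  have hdisj : Disjoint (Finset.Icc (-J - j) (-1)) (Finset.Icc (1:ℤ) (J - j)) := by
    rw [Finset.disjoint_left]
    intro k hk1 hk2
    rw [Finset.mem_Icc] at hk1 hk2
    omega
  have himg : Finset.Icc (-J - j) (-1) = (Finset.Icc (1:ℤ) (J + j)).image (fun k => -k) := by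
    ext k
    simp only [Finset.mem_Icc, Finset.mem_image]
    constructor
    · intro hk
      exact ⟨-k, by omega, by omega⟩
    · rintro ⟨a, ha, rfl⟩
      omega
  have hneg_reindex : ∑ k ∈ Finset.Icc (-J - j) (-1), |(k:ℝ)| ^ (-(1 + α)) =
      ∑ k ∈ Finset.Icc (1:ℤ) (J + j), |(k:ℝ)| ^ (-(1 + α)) := by
    rw [himg, Finset.sum_image (by intro x _ y _ hxy; exact neg_inj.mp hxy)]
    apply Finset.sum_congr rfl
    intro k _
    push_cast
    rw [abs_neg]
  have hKabs : ∑ k ∈ K, |(k:ℝ)| ^ (-(1 + α)) ≤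
      2 + (1 - ((J + j : ℤ):ℝ) ^ (-α)) / α + (1 - ((J - j : ℤ):ℝ) ^ (-α)) / α := by
    rw [hKsplit, Finset.sum_union hdisj, hneg_reindex]
    linarith [aux_L1 hα0 (J + j) hP1, aux_L1 hα0 (J - j) hN1]
  have habs_mul : ∀ k : ℤ, |(k:ℝ) * h| ^ (-(1 + α)) = |(k:ℝ)| ^ (-(1 + α)) * h ^ (-(1 + α)) := by
    intro k
    rw [abs_mul, abs_of_pos hh0, Real.mul_rpow (abs_nonneg _) hh0.le]
  have hrle : ∀ k : ℤ, r k ≤ |(k:ℝ)| ^ (-(1 + α)) * h ^ (-(1 + α)) := by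
    intro k
    rw [← habs_mul k, hr_def]
    dsimp only
    have hpow : (0:ℝ) ≤ |(k:ℝ) * h| ^ (-(1 + α)) := Real.rpow_nonneg (abs_nonneg _) _
    split_ifs <;> linarith
  have hSle : Sf ≤ (∑ k ∈ K, |(k:ℝ)| ^ (-(1 + α))) * h ^ (-(1 + α)) := by
    rw [hSf_def, Finset.sum_mul]
    exact Finset.sum_le_sum fun k _ => hrle k
  have hh1 : h * h ^ (-(1 + α)) = h ^ (-α) := by
    nth_rewrite 1 [← Real.rpow_one h]
    rw [← Real.rpow_add hh0]
    congr 1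
    ring
  have hhinv : h ^ α * h ^ (-α) = 1 := by
    rw [← Real.rpow_add hh0]
    simp
  have hA_eq : A = ((J + j : ℤ):ℝ) ^ (-α) * h ^ (-α) := by
    rw [hA_def, ← Real.mul_rpow hPr.le hh0.le]
    congr 1
    rw [hh]
    push_cast
    field_simp
  have hB_eq : Bb = ((J - j : ℤ):ℝ) ^ (-α) * h ^ (-α) := by
    rw [hB_def, ← Real.mul_rpow hNr.le hh0.le]
    congr 1
    rw [hh]
    push_cast
    field_simp
  have hA0 : 0 ≤ A := by rw [hA_eq]; positivity
  have hB0 : 0 ≤ Bb := by rw [hB_eq]; positivity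
  have hSf0 : 0 ≤ Sf := Finset.sum_nonneg fun k _ => hr_nonneg k
  set P := ((J + j : ℤ):ℝ) ^ (-α) with hP_def
  set N := ((J - j : ℤ):ℝ) ^ (-α) with hN_def
  have hinner : (A + Bb)/α + h * Sf - 2*z*(h^(-α)) ≤ h^(-α) * (2 + 2/α - 2*z) := by
    have e1 : h * Sf ≤ h^(-α) * (2 + (1 - P)/α + (1 - N)/α) := by
      calc h * Sf ≤ h * ((∑ k ∈ K, |(k:ℝ)| ^ (-(1 + α))) * h ^ (-(1 + α))) :=
            mul_le_mul_of_nonneg_left hSle hh0.le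
        _ = (h * h^(-(1 + α))) * (∑ k ∈ K, |(k:ℝ)| ^ (-(1 + α))) := by ring
        _ = h^(-α) * (∑ k ∈ K, |(k:ℝ)| ^ (-(1 + α))) := by rw [hh1]
        _ ≤ h^(-α) * (2 + (1 - P)/α + (1 - N)/α) :=
            mul_le_mul_of_nonneg_left hKabs hhpos.le
    have e3 : (P + N)/α + (2 + (1 - P)/α + (1 - N)/α) - 2*z = 2 + 2/α - 2*z := by
      field_simp
      ring
    calc (A + Bb)/α + h * Sf - 2*z*(h^(-α))
        ≤ h^(-α) * ((P + N)/α) + h^(-α) * (2 + (1 - P)/α + (1 - N)/α) - 2*z*(h^(-α)) := by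
          rw [hA_eq, hB_eq]
          have e2 : (P * h^(-α) + N * h^(-α))/α = h^(-α) * ((P + N)/α) := by ring
          linarith only [e1, e2]
      _ = h^(-α) * ((P + N)/α + (2 + (1 - P)/α + (1 - N)/α) - 2*z) := by ring
      _ = h^(-α) * (2 + 2/α - 2*z) := by rw [e3]
  have hinner0 : 0 ≤ (A + Bb)/α + h * Sf - 2*z*(h^(-α)) := by
    have h1 : 0 ≤ (A + Bb)/α := div_nonneg (by linarith) hα0.le
    have h2 : 0 ≤ h * Sf := mul_nonneg hh0.le hSf0
    have h3 : 0 ≤ (-2*z) * h^(-α) := mul_nonneg (by linarith only [hzneg]) hhpos.le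
    linarith only [h1, h2, h3]
  have hDen : 0 < 2 * Mt ^ α * c1 α * (1 + 1/α - z) := by
    have hMtα : 0 < Mt ^ α := Real.rpow_pos_of_pos hMt _
    have h1α : 0 < 1/α := by positivity
    have : 0 < 1 + 1/α - z := by linarith
    positivity
  have hCFL2 : Δt * (2 * Mt ^ α * c1 α * (1 + 1/α - z)) ≤ h ^ α := by
    have hhα : 0 < h ^ α := Real.rpow_pos_of_pos hh0 _
    rw [div_le_div_iff₀ hhα hDen] at hCFL
    linarith only [hCFL]
  have hT : c * Δt / α * (A + Bb) + c*Δt*h*Sf - 2*E ≤ 1 := by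
    have hfac : c * Δt / α * (A + Bb) + c*Δt*h*Sf - 2*E =
        (Δt * c) * ((A + Bb)/α + h * Sf - 2*z*(h^(-α))) := by
      rw [hE_def]
      ring
    have step1 : (Δt * c) * ((A + Bb)/α + h * Sf - 2*z*(h^(-α))) ≤
        (Δt * (c1 α * Mt ^ α)) * ((A + Bb)/α + h * Sf - 2*z*(h^(-α))) :=
      mul_le_mul_of_nonneg_right (mul_le_mul_of_nonneg_left hcle hΔt.le) hinner0
    have step2 : (Δt * (c1 α * Mt ^ α)) * ((A + Bb)/α + h * Sf - 2*z*(h^(-α))) ≤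
        (Δt * (c1 α * Mt ^ α)) * (h^(-α) * (2 + 2/α - 2*z)) := by
      apply mul_le_mul_of_nonneg_left hinner
      have : 0 < Mt ^ α := Real.rpow_pos_of_pos hMt _
      positivity
    have step3 : (Δt * (c1 α * Mt ^ α)) * (h^(-α) * (2 + 2/α - 2*z)) ≤ 1 := by
      calc (Δt * (c1 α * Mt ^ α)) * (h^(-α) * (2 + 2/α - 2*z))
          = (Δt * (2 * Mt ^ α * c1 α * (1 + 1/α - z))) * h^(-α) := by ring
        _ ≤ h ^ α * h^(-α) := mul_le_mul_of_nonneg_right hCFL2 hhpos.le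
        _ = 1 := hhinv
    rw [hfac]
    linarith only [step1, step2, step3]
  have hD0 : 0 ≤ 1 + 2*E - c * Δt / α * (A + Bb) - c*Δt*h*Sf := by linarith only [hT]
  have hq1 : 0 ≤ c*Δt*h * r 1 - E := by
    have h1 := mul_nonneg hcdh (hr_nonneg 1)
    linarith only [h1, hE0]
  have hqm1 : 0 ≤ c*Δt*h * r (-1) - E := by
    have h1 := mul_nonneg hcdh (hr_nonneg (-1))
    linarith only [h1, hE0]
  have hBt0 : 0 ≤ c * Δt / α * (A + Bb) := by
    apply mul_nonneg (div_nonneg (mul_nonneg hc0 hΔt.le) hα0.le)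
    linarith
  constructor
  · rw [hmain]
    have hsumnn : 0 ≤ ∑ k ∈ K2, r k * U (j + k) :=
      Finset.sum_nonneg fun k hk => mul_nonneg (hr_nonneg k) (hUin k (hK2sub k hk)).1
    have t1 : 0 ≤ (1 + 2*E - c * Δt / α * (A + Bb) - c*Δt*h*Sf) * U j :=
      mul_nonneg hD0 hUj.1
    have t2 : 0 ≤ (c*Δt*h * r 1 - E) * U (j+1) := mul_nonneg hq1 hU1.1
    have t3 : 0 ≤ (c*Δt*h * r (-1) - E) * U (j-1) := mul_nonneg hqm1 hUm1.1
    have t4 : 0 ≤ c*Δt*h * (∑ k ∈ K2, r k * U (j + k)) := mul_nonneg hcdh hsumnn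
    linarith only [t1, t2, t3, t4]
  · rw [hmain]
    have hsum2 : ∑ k ∈ K2, r k * U (j + k) ≤ (∑ k ∈ K2, r k) * M := by
      rw [Finset.sum_mul]
      exact Finset.sum_le_sum fun k hk =>
        mul_le_mul_of_nonneg_left (hUin k (hK2sub k hk)).2 (hr_nonneg k)
    have t1 : (1 + 2*E - c * Δt / α * (A + Bb) - c*Δt*h*Sf) * U j ≤
        (1 + 2*E - c * Δt / α * (A + Bb) - c*Δt*h*Sf) * M :=
      mul_le_mul_of_nonneg_left hUj.2 hD0
    have t2 : (c*Δt*h * r 1 - E) * U (j+1) ≤ (c*Δt*h * r 1 - E) * M :=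
      mul_le_mul_of_nonneg_left hU1.2 hq1
    have t3 : (c*Δt*h * r (-1) - E) * U (j-1) ≤ (c*Δt*h * r (-1) - E) * M :=
      mul_le_mul_of_nonneg_left hUm1.2 hqm1
    have t4 : c*Δt*h * (∑ k ∈ K2, r k * U (j + k)) ≤ c*Δt*h * ((∑ k ∈ K2, r k) * M) :=
      mul_le_mul_of_nonneg_left hsum2 hcdh
    have hcollect : (1 + 2*E - c * Δt / α * (A + Bb) - c*Δt*h*Sf) * M
        + (c*Δt*h * r 1 - E) * M + (c*Δt*h * r (-1) - E) * M
        + c*Δt*h * ((∑ k ∈ K2, r k) * M) = (1 - c * Δt / α * (A + Bb)) * M := by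
      rw [hsplitr]
      ring
    have hfinal : (1 - c * Δt / α * (A + Bb)) * M ≤ M := by
      have h1 := mul_nonneg hBt0 hM.le
      have h2 : (1 - c * Δt / α * (A + Bb)) * M = M - (c * Δt / α * (A + Bb)) * M := by ring
      linarith only [h1, h2]
    linarith only [t1, t2, t3, t4, hcollect, hfinal]
end
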